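/- A single-hidden-layer ReLU network f : ℝⁿ → ℝ with h hidden units induces a positive decision region {x | f x > 0} having at most 2ʰ connected components. -/

import Mathlib

open Set

theorem relu_network_components_le_two_pow {n h : ℕ}
    (w : Fin h → EuclideanSpace ℝ (Fin n)) (v b : Fin h → ℝ) (c : ℝ)
    (f : EuclideanSpace ℝ (Fin n) → ℝ)
    (hf : ∀ x, f x = ∑ i, v i * max 0 ((inner ℝ (w i) x : ℝ) + b i) + c) :
    {C : Set (EuclideanSpace ℝ (Fin n)) |
        ∃ x ∈ {y | 0 < f y}, C = connectedComponentIn {y | 0 < f y} x}.Finite ∧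
    Nat.card {C : Set (EuclideanSpace ℝ (Fin n)) |
        ∃ x ∈ {y | 0 < f y}, C = connectedComponentIn {y | 0 < f y} x} ≤ 2 ^ h := by
  classical
  set S : Set (EuclideanSpace ℝ (Fin n)) := {y | 0 < f y} with hSdef
  set L : Fin h → EuclideanSpace ℝ (Fin n) → ℝ :=
    fun i x => (inner ℝ (w i) x : ℝ) + b i with hLdef
  set σ : EuclideanSpace ℝ (Fin n) → (Fin h → Bool) :=
    fun x i => decide (0 < L i x) with hσdef
  set T : (Fin h → Bool) → Set (EuclideanSpace ℝ (Fin n)) :=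
    fun p => {x | ∀ i, if p i then 0 < L i x else L i x ≤ 0} ∩ S with hTdef
  have hlin : ∀ u : EuclideanSpace ℝ (Fin n),
      IsLinearMap ℝ (fun x : EuclideanSpace ℝ (Fin n) => (inner ℝ u x : ℝ)) :=
    fun u => ⟨fun x y => inner_add_right u x y, fun r x => real_inner_smul_right u x r⟩
  -- on the cell, f is affine
  have hfu : ∀ p : Fin h → Bool, ∀ x ∈ {x | ∀ i, if p i then 0 < L i x else L i x ≤ 0},
      f x = (inner ℝ (∑ i, if p i then v i • w i else 0) x : ℝ)
        + ((∑ i, if p i then v i * b i else 0) + c) := by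
    intro p x hx
    have h1 : (inner ℝ (∑ i, if p i then v i • w i else 0) x : ℝ)
        = ∑ i, if p i then v i * (inner ℝ (w i) x : ℝ) else 0 := by
      rw [sum_inner]
      refine Finset.sum_congr rfl fun i _ => ?_
      by_cases hp : p i
      · rw [if_pos hp, if_pos hp, real_inner_smul_left]
      · rw [if_neg hp, if_neg hp, inner_zero_left]
    rw [h1, hf x]
    have h2 : ∀ i : Fin h, v i * max 0 ((inner ℝ (w i) x : ℝ) + b i)
        = (if p i then v i * (inner ℝ (w i) x : ℝ) else 0) + (if p i then v i * b i else 0) := by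
      intro i
      have hxi := hx i
      by_cases hp : p i
      · rw [if_pos hp] at hxi
        rw [if_pos hp, if_pos hp, max_eq_right (le_of_lt hxi)]
        simp only [hLdef]
        ring
      · rw [if_neg hp] at hxi
        rw [if_neg hp, if_neg hp, max_eq_left hxi]
        ring
    rw [Finset.sum_congr rfl fun i _ => h2 i, Finset.sum_add_distrib]
    ring
  -- each piece is convex
  have hconv : ∀ p : Fin h → Bool, Convex ℝ (T p) := by
    intro p
    have hcell : Convex ℝ {x : EuclideanSpace ℝ (Fin n) |
        ∀ i, if p i then 0 < L i x else L i x ≤ 0} := by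
      have he : {x : EuclideanSpace ℝ (Fin n) | ∀ i, if p i then 0 < L i x else L i x ≤ 0}
          = ⋂ i, {x : EuclideanSpace ℝ (Fin n) | if p i then 0 < L i x else L i x ≤ 0} := by
        ext x; simp [Set.mem_iInter]
      rw [he]
      refine convex_iInter fun i => ?_
      by_cases hp : p i
      · have he2 : {x : EuclideanSpace ℝ (Fin n) | if p i then 0 < L i x else L i x ≤ 0}
            = {x : EuclideanSpace ℝ (Fin n) | -b i < (inner ℝ (w i) x : ℝ)} := by
          ext x
          rw [Set.mem_setOf_eq, Set.mem_setOf_eq, if_pos hp]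
          simp only [hLdef]
          constructor <;> intro hh <;> linarith
        rw [he2]
        exact convex_halfSpace_gt (hlin (w i)) (-b i)
      · have he2 : {x : EuclideanSpace ℝ (Fin n) | if p i then 0 < L i x else L i x ≤ 0}
            = {x : EuclideanSpace ℝ (Fin n) | (inner ℝ (w i) x : ℝ) ≤ -b i} := by
          ext x
          rw [Set.mem_setOf_eq, Set.mem_setOf_eq, if_neg hp]
          simp only [hLdef]
          constructor <;> intro hh <;> linarith
        rw [he2]
        exact convex_halfSpace_le (hlin (w i)) (-b i)
    have he3 : T p = {x : EuclideanSpace ℝ (Fin n) | ∀ i, if p i then 0 < L i x else L i x ≤ 0}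
        ∩ {x : EuclideanSpace ℝ (Fin n) | -((∑ i, if p i then v i * b i else 0) + c)
            < (inner ℝ (∑ i, if p i then v i • w i else 0) x : ℝ)} := by
      ext x
      simp only [hTdef, Set.mem_inter_iff, Set.mem_setOf_eq, hSdef]
      constructor
      · rintro ⟨hc, hpos⟩
        refine ⟨hc, ?_⟩
        have := hfu p x hc
        rw [this] at hpos; linarith
      · rintro ⟨hc, hpos⟩
        refine ⟨hc, ?_⟩
        have := hfu p x hc
        rw [this]; linarith
    rw [he3]
    exact hcell.inter (convex_halfSpace_gt (hlin _) _)
  -- each point of S lies in its piece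
  have hmem : ∀ x ∈ S, x ∈ T (σ x) := by
    intro x hx
    refine ⟨fun i => ?_, hx⟩
    by_cases hp : (0 < L i x)
    · simp [hσdef, hp]
    · simp [hσdef, hp, le_of_not_gt hp]
  have hsub : ∀ p, T p ⊆ S := fun p => Set.inter_subset_right
  -- same pattern ⇒ same component
  have hsame : ∀ x ∈ S, ∀ y ∈ S, σ x = σ y →
      connectedComponentIn S x = connectedComponentIn S y := by
    intro x hx y hy hxy
    have hxT : x ∈ T (σ x) := hmem x hx
    have hyT : y ∈ T (σ x) := hxy ▸ hmem y hy
    have hpre : IsPreconnected (T (σ x)) := (hconv (σ x)).isPreconnected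
    have hss := hpre.subset_connectedComponentIn hxT (hsub _)
    exact connectedComponentIn_eq (hss hyT)
  set Comp := {C : Set (EuclideanSpace ℝ (Fin n)) |
      ∃ x ∈ S, C = connectedComponentIn S x} with hComp
  have hinj : ∃ Φ : Comp → (Fin h → Bool), Function.Injective Φ := by
    refine ⟨fun C => σ C.2.choose, ?_⟩
    intro C D hCD
    have hC := C.2.choose_spec
    have hD := D.2.choose_spec
    apply Subtype.ext
    rw [hC.2, hD.2]
    exact hsame _ hC.1 _ hD.1 hCD
  obtain ⟨Φ, hΦ⟩ := hinj
  haveI hfin : Finite Comp := Finite.of_injective Φ hΦ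
  refine ⟨Set.toFinite _, ?_⟩
  calc Nat.card Comp ≤ Nat.card (Fin h → Bool) := Nat.card_le_card_of_injective Φ hΦ
    _ = 2 ^ h := by simp [Nat.card_eq_fintype_card]
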